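/- Let g = diag(g_b, g_f), B = [[B_b, B_m],[-B_mᵀ, B_f]] as above, and define B̃_f = -g_f⁻¹B_f(g_f - B_f g_f⁻¹B_f)⁻¹, B̃_m = -B_m B̃_f, B̃_b = B_b - B̃_m B_mᵀ, B̃ = [[B̃_b, B̃_m],[-B̃_mᵀ, B̃_f]], and g̃ = ([[g_b⁻¹, g_b⁻¹B_m],[B_mᵀg_b⁻¹, g_f + B_mᵀg_b⁻¹B_m - B_f g_f⁻¹B_f]])⁻¹. Then B̃ g̃⁻¹ = [[B_b g_b⁻¹, B_b g_b⁻¹ B_m + B_m g_f⁻¹ B_f],[0, -g_f⁻¹ B_f]]. -/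
import Mathlib


open Matrix

theorem Tdual_Bfield_formula {m k : ℕ}
    (gb : Matrix (Fin m) (Fin m) ℝ) (gf : Matrix (Fin k) (Fin k) ℝ)
    (Bb : Matrix (Fin m) (Fin m) ℝ) (Bf : Matrix (Fin k) (Fin k) ℝ)
    (Bm : Matrix (Fin m) (Fin k) ℝ)
    (hgb : gb.PosDef) (hgf : gf.PosDef)
    (hBb : Bbᵀ = -Bb) (hBf : Bfᵀ = -Bf) :
    let Btf : Matrix (Fin k) (Fin k) ℝ := -(gf⁻¹ * Bf * (gf - Bf * gf⁻¹ * Bf)⁻¹)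
    let Btm : Matrix (Fin m) (Fin k) ℝ := -(Bm * Btf)
    let Btb : Matrix (Fin m) (Fin m) ℝ := Bb - Btm * Bmᵀ
    let Bt : Matrix (Fin m ⊕ Fin k) (Fin m ⊕ Fin k) ℝ :=
      Matrix.fromBlocks Btb Btm (-Btmᵀ) Btf
    let gt : Matrix (Fin m ⊕ Fin k) (Fin m ⊕ Fin k) ℝ :=
      (Matrix.fromBlocks gb⁻¹ (gb⁻¹ * Bm) (Bmᵀ * gb⁻¹)
        (gf + Bmᵀ * gb⁻¹ * Bm - Bf * gf⁻¹ * Bf))⁻¹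
    Bt * gt⁻¹ =
      Matrix.fromBlocks (Bb * gb⁻¹) (Bb * gb⁻¹ * Bm + Bm * gf⁻¹ * Bf)
        0 (-(gf⁻¹ * Bf)) := by
  intro Btf Btm Btb Bt gt
  set S : Matrix (Fin k) (Fin k) ℝ := gf - Bf * gf⁻¹ * Bf with hSdef
  -- S is positive definite
  have hgfinv : gf⁻¹.PosDef := hgf.inv
  have hS : S.PosDef := by
    have h1 : (Bfᵀ * gf⁻¹ * Bf).PosSemidef := by
      have := hgfinv.posSemidef.conjTranspose_mul_mul_same Bf
      simpa using this
    have : S = gf + Bfᵀ * gf⁻¹ * Bf := by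
      rw [hSdef, hBf]
      noncomm_ring
    rw [this]
    exact hgf.add_posSemidef h1
  have hSunit : IsUnit S.det := isUnit_iff_isUnit_det _ |>.mp hS.isUnit
  have hSinv : S⁻¹ * S = 1 := nonsing_inv_mul S hSunit
  have hSinv' : S * S⁻¹ = 1 := mul_nonsing_inv S hSunit
  have hgfunit : IsUnit gf.det := isUnit_iff_isUnit_det _ |>.mp hgf.isUnit
  have hgfi : gf⁻¹ * gf = 1 := nonsing_inv_mul gf hgfunit
  have hgfi' : gf * gf⁻¹ = 1 := mul_nonsing_inv gf hgfunit
  have hgbunit : IsUnit gb.det := isUnit_iff_isUnit_det _ |>.mp hgb.isUnit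
  have hgbi : gb⁻¹ * gb = 1 := nonsing_inv_mul gb hgbunit
  have hgbi' : gb * gb⁻¹ = 1 := mul_nonsing_inv gb hgbunit
  -- symmetry facts
  have hgfs : gfᵀ = gf := hgf.isHermitian
  have hgfinvs : (gf⁻¹)ᵀ = gf⁻¹ := hgfinv.isHermitian
  have hgbinvs : (gb⁻¹)ᵀ = gb⁻¹ := hgb.inv.isHermitian
  -- commuting: gf⁻¹ * Bf * S⁻¹ = S⁻¹ * Bf * gf⁻¹
  have hcomm0 : S * (gf⁻¹ * Bf) = Bf * gf⁻¹ * S := by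
    rw [hSdef]
    simp only [Matrix.sub_mul, Matrix.mul_sub]
    have e1 : gf * (gf⁻¹ * Bf) = Bf := by rw [← Matrix.mul_assoc, hgfi', Matrix.one_mul]
    have e2 : Bf * gf⁻¹ * gf = Bf := by rw [Matrix.mul_assoc, hgfi, Matrix.mul_one]
    have e3 : Bf * gf⁻¹ * Bf * (gf⁻¹ * Bf) = Bf * gf⁻¹ * (Bf * gf⁻¹ * Bf) := by
      simp [Matrix.mul_assoc]
    rw [e1, e2, e3]
  have hcomm : gf⁻¹ * Bf * S⁻¹ = S⁻¹ * (Bf * gf⁻¹) := by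
    calc gf⁻¹ * Bf * S⁻¹ = S⁻¹ * (S * (gf⁻¹ * Bf)) * S⁻¹ := by
          rw [← Matrix.mul_assoc S⁻¹ S, hSinv, Matrix.one_mul, Matrix.mul_assoc]
      _ = S⁻¹ * (Bf * gf⁻¹ * S) * S⁻¹ := by rw [hcomm0]
      _ = S⁻¹ * (Bf * gf⁻¹) := by simp [Matrix.mul_assoc, hSinv']
  -- Btf is skew
  have hBtfT : Btfᵀ = -Btf := by
    show (-(gf⁻¹ * Bf * S⁻¹))ᵀ = -(-(gf⁻¹ * Bf * S⁻¹))
    have hST : Sᵀ = S := by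
      rw [hSdef]
      simp [Matrix.transpose_sub, Matrix.transpose_mul, hBf, hgfs, hgfinvs, Matrix.mul_assoc]
    have hSinvT : (S⁻¹)ᵀ = S⁻¹ := by rw [Matrix.transpose_nonsing_inv, hST]
    rw [Matrix.transpose_neg, neg_neg, Matrix.transpose_mul, Matrix.transpose_mul,
      hSinvT, hBf, hgfinvs, hcomm]
    simp [Matrix.mul_assoc, Matrix.neg_mul, Matrix.mul_neg]
  -- the inner matrix
  set M : Matrix (Fin m ⊕ Fin k) (Fin m ⊕ Fin k) ℝ :=
    Matrix.fromBlocks gb⁻¹ (gb⁻¹ * Bm) (Bmᵀ * gb⁻¹)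
      (gf + Bmᵀ * gb⁻¹ * Bm - Bf * gf⁻¹ * Bf) with hMdef
  have : Invertible gb⁻¹ := hgb.inv.isUnit.invertible
  have hSchur : (gf + Bmᵀ * gb⁻¹ * Bm - Bf * gf⁻¹ * Bf) - Bmᵀ * gb⁻¹ * ⅟(gb⁻¹) * (gb⁻¹ * Bm) = S := by
    have h1 : ⅟(gb⁻¹) = gb := by
      have : Invertible gb := gb.invertibleOfIsUnitDet hgbunit
      rw [invOf_eq_nonsing_inv, nonsing_inv_nonsing_inv gb hgbunit]
    rw [h1, hSdef]
    have : Bmᵀ * gb⁻¹ * gb * (gb⁻¹ * Bm) = Bmᵀ * gb⁻¹ * Bm := by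
      rw [Matrix.mul_assoc (Bmᵀ * gb⁻¹) gb, ← Matrix.mul_assoc gb gb⁻¹ Bm, hgbi', Matrix.one_mul]
    rw [this]
    abel
  have : Invertible ((gf + Bmᵀ * gb⁻¹ * Bm - Bf * gf⁻¹ * Bf) - Bmᵀ * gb⁻¹ * ⅟(gb⁻¹) * (gb⁻¹ * Bm)) := by
    rw [hSchur]; exact hS.isUnit.invertible
  have hMinv : Invertible M := Matrix.fromBlocks₁₁Invertible _ _ _ _
  have hMunit : IsUnit M.det := Matrix.isUnit_det_of_invertible M
  have hgt : gt⁻¹ = M := by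
    show M⁻¹⁻¹ = M
    exact nonsing_inv_nonsing_inv M hMunit
  rw [hgt]
  show Matrix.fromBlocks Btb Btm (-Btmᵀ) Btf * M = _
  rw [hMdef, Matrix.fromBlocks_multiply]
  have hBtm : Btm = Bm * (gf⁻¹ * Bf * S⁻¹) := by
    show -(Bm * -(gf⁻¹ * Bf * S⁻¹)) = _
    simp [Matrix.mul_neg]
  have hBtf' : Btf = -(gf⁻¹ * Bf * S⁻¹) := rfl
  have hskew : (gf⁻¹ * Bf * S⁻¹)ᵀ = -(gf⁻¹ * Bf * S⁻¹) := by
    have h := hBtfT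
    rw [hBtf'] at h
    rw [Matrix.transpose_neg, neg_neg] at h
    exact neg_eq_iff_eq_neg.mp h
  have h1 : Btmᵀ = Btf * Bmᵀ := by
    rw [hBtm, Matrix.transpose_mul, hskew, hBtf']
  refine Matrix.fromBlocks_inj.mpr ⟨?_, ?_, ?_, ?_⟩
  · -- top left
    show (Bb - Btm * Bmᵀ) * gb⁻¹ + Btm * (Bmᵀ * gb⁻¹) = Bb * gb⁻¹
    rw [Matrix.sub_mul, ← Matrix.mul_assoc]
    abel
  · -- top right
    show (Bb - Btm * Bmᵀ) * (gb⁻¹ * Bm) + Btm * (gf + Bmᵀ * gb⁻¹ * Bm - Bf * gf⁻¹ * Bf)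
      = Bb * gb⁻¹ * Bm + Bm * gf⁻¹ * Bf
    have h2 : Btm * (gf + Bmᵀ * gb⁻¹ * Bm - Bf * gf⁻¹ * Bf)
        = Btm * S + Btm * (Bmᵀ * gb⁻¹ * Bm) := by
      rw [hSdef, Matrix.mul_sub, Matrix.mul_add, Matrix.mul_sub]
      abel
    have h3 : Btm * S = Bm * gf⁻¹ * Bf := by
      rw [hBtm, Matrix.mul_assoc, Matrix.mul_assoc, Matrix.mul_assoc, hSinv, Matrix.mul_one,
        ← Matrix.mul_assoc]
    rw [h2, h3, Matrix.sub_mul]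
    simp only [Matrix.mul_assoc]
    abel
  · -- bottom left
    show -Btmᵀ * gb⁻¹ + Btf * (Bmᵀ * gb⁻¹) = 0
    rw [h1]
    simp [Matrix.neg_mul, Matrix.mul_assoc]
  · -- bottom right
    show -Btmᵀ * (gb⁻¹ * Bm) + Btf * (gf + Bmᵀ * gb⁻¹ * Bm - Bf * gf⁻¹ * Bf) = -(gf⁻¹ * Bf)
    have h2 : Btf * (gf + Bmᵀ * gb⁻¹ * Bm - Bf * gf⁻¹ * Bf)
        = Btf * S + Btf * (Bmᵀ * gb⁻¹ * Bm) := by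
      rw [hSdef, Matrix.mul_sub, Matrix.mul_add, Matrix.mul_sub]
      abel
    have h3 : Btf * S = -(gf⁻¹ * Bf) := by
      rw [hBtf', Matrix.neg_mul, Matrix.mul_assoc, hSinv, Matrix.mul_one]
    rw [h2, h3, h1]
    simp only [Matrix.neg_mul, Matrix.mul_assoc]
    abel
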